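/- arXiv:1902.07160 — 2 statements merged into one kernel-verified Lean document; each statement's English description precedes it below -/
import Mathlib

section
/- The function f(θ) = (1 + 1/cos θ)(1 + 1/sin θ) on (0, π/2) attains its minimum value 3 + 2√2 uniquely at θ = π/4; i.e., among all unit right triangles, the isosceles one has minimum area, equal to 3 + 2√2. -/
open Real

theorem unit_right_triangle_min_area
    (f : ℝ → ℝ) (hf : ∀ θ, f θ = (1 + 1 / cos θ) * (1 + 1 / sin θ)) :
    f (π / 4) = 3 + 2 * Real.sqrt 2 ∧
    ∀ θ : ℝ, 0 < θ → θ < π / 2 →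
      (3 + 2 * Real.sqrt 2 ≤ f θ ∧ (f θ = 3 + 2 * Real.sqrt 2 ↔ θ = π / 4)) := by
  have hr2 : (Real.sqrt 2) ^ 2 = 2 := Real.sq_sqrt (by norm_num)
  have hr2pos : (0:ℝ) < Real.sqrt 2 := Real.sqrt_pos.mpr (by norm_num)
  have hval : f (π / 4) = 3 + 2 * Real.sqrt 2 := by
    rw [hf, Real.cos_pi_div_four, Real.sin_pi_div_four]
    field_simp
    nlinarith [hr2]
  refine ⟨hval, fun θ h0 h2 => ?_⟩
  have hs : 0 < Real.sin θ := Real.sin_pos_of_pos_of_lt_pi h0 (by linarith [Real.pi_pos])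
  have hc : 0 < Real.cos θ := Real.cos_pos_of_mem_Ioo ⟨by linarith [Real.pi_pos], h2⟩
  have hpyth : Real.sin θ ^ 2 + Real.cos θ ^ 2 = 1 := Real.sin_sq_add_cos_sq θ
  set s := Real.sin θ
  set c := Real.cos θ
  have hp2 : (s + c) ^ 2 ≤ 2 := by nlinarith [sq_nonneg (s - c)]
  have hple : s + c ≤ Real.sqrt 2 := by nlinarith [sq_nonneg (s + c - Real.sqrt 2)]
  have hpgt : 1 < s + c := by nlinarith [mul_pos hs hc]
  have hfθ : f θ = (1 + 1 / c) * (1 + 1 / s) := hf θ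
  have hle : 3 + 2 * Real.sqrt 2 ≤ f θ := by
    rw [hfθ, show (1 + 1 / c) * (1 + 1 / s) = (c*s + c + s + 1)/(c*s) by field_simp; ring,
      le_div_iff₀ (by positivity)]
    nlinarith [mul_pos hs hc, mul_nonneg (mul_nonneg hs.le hc.le) (sub_nonneg.mpr hple)]
  refine ⟨hle, ⟨fun heq => ?_, fun heq => heq ▸ hval⟩⟩
  -- equality forces s = c
  have hsc : s = c := by
    by_contra hne
    have h1 : (s - c) ^ 2 > 0 := by
      have := sub_ne_zero.mpr hne
      positivity
    have : 3 + 2 * Real.sqrt 2 < f θ := by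
      rw [hfθ, show (1 + 1 / c) * (1 + 1 / s) = (c*s + c + s + 1)/(c*s) by field_simp; ring,
        lt_div_iff₀ (by positivity)]
      have hp2' : (s + c) ^ 2 < 2 := by nlinarith
      have hplt : s + c < Real.sqrt 2 := by nlinarith [sq_nonneg (s + c - Real.sqrt 2)]
      nlinarith [mul_pos hs hc, mul_pos (mul_pos hs hc) (sub_pos.mpr hplt)]
    linarith [heq ▸ this]
  have hs2 : s = Real.sqrt 2 / 2 := by
    have hsq : s ^ 2 = (Real.sqrt 2 / 2) ^ 2 := by nlinarith
    calc s = Real.sqrt (s ^ 2) := (Real.sqrt_sq hs.le).symm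
    _ = Real.sqrt ((Real.sqrt 2 / 2) ^ 2) := by rw [hsq]
    _ = Real.sqrt 2 / 2 := Real.sqrt_sq (by positivity)
  have : Real.arcsin s = θ := Real.arcsin_sin (by linarith [Real.pi_pos]) (by linarith [Real.pi_pos])
  rw [← this, hs2, ← Real.sin_pi_div_four]
  exact Real.arcsin_sin (by linarith [Real.pi_pos]) (by linarith [Real.pi_pos])
end

section
/- For a triangle-friendly pair (r, s) (meaning 0 < r ≤ 1, 0 < s ≤ 1, r + s > 1), the fundamental measure Π(r,s) = (r+s+1)^(3/2) / ((-r+s+1)^(1/2) (r-s+1)^(1/2) (r+s-1)^(1/2)) attains its minimum value 3√3 uniquely at r = s = 1 (the equilateral triangle). -/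
open Real

theorem unit_triangle_min_area
    (Pi : ℝ → ℝ → ℝ)
    (hPi : ∀ r s, Pi r s =
      (r + s + 1) ^ ((3 : ℝ) / 2) /
        (((-r + s + 1) * (r - s + 1) * (r + s - 1)) ^ ((1 : ℝ) / 2))) :
    Pi 1 1 = 3 * Real.sqrt 3 ∧
    ∀ r s : ℝ, 0 < r → 0 < s → r ≤ 1 → s ≤ 1 → 1 < r + s →
      (3 * Real.sqrt 3 ≤ Pi r s ∧
        (Pi r s = 3 * Real.sqrt 3 ↔ r = 1 ∧ s = 1)) := by
  have h27 : Real.sqrt 27 = 3 * Real.sqrt 3 := by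
    rw [show (27:ℝ) = 3^2 * 3 by norm_num, Real.sqrt_mul (by positivity),
      Real.sqrt_sq (by norm_num)]
  have hpow : ∀ x : ℝ, 0 < x → x ^ ((3:ℝ)/2) = Real.sqrt (x^3) := by
    intro x hx
    rw [show ((3:ℝ)/2) = (3:ℝ) * (1/2) by ring, Real.rpow_mul hx.le,
      Real.sqrt_eq_rpow]
    rw [show (3:ℝ) = ((3:ℕ):ℝ) by norm_num, Real.rpow_natCast]
  have hPi11 : Pi 1 1 = 3 * Real.sqrt 3 := by
    rw [hPi]
    norm_num
    rw [hpow 3 (by norm_num), show ((3:ℝ)^3 = 27) by norm_num, h27]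
  refine ⟨hPi11, ?_⟩
  intro r s hr hs hr1 hs1 hrs
  have hA : 0 < -r + s + 1 := by linarith
  have hB : 0 < r - s + 1 := by linarith
  have hC : 0 < r + s - 1 := by linarith
  have hP : 0 < (-r + s + 1) * (r - s + 1) * (r + s - 1) := by positivity
  have hX : 0 < r + s + 1 := by linarith
  have hsqrt : Pi r s =
      Real.sqrt ((r + s + 1)^3 / ((-r + s + 1) * (r - s + 1) * (r + s - 1))) := by
    rw [hPi, hpow _ hX, ← Real.sqrt_eq_rpow,
      Real.sqrt_div (by positivity)]
  have hkey : 27 * ((-r + s + 1) * (r - s + 1) * (r + s - 1)) ≤ (r + s + 1)^3 := by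
    nlinarith [mul_nonneg (sq_nonneg (2 - r - s)) (show (0:ℝ) ≤ 7 + r + s by linarith),
      mul_nonneg (sq_nonneg (r - s)) hC.le]
  have hge : 3 * Real.sqrt 3 ≤ Pi r s := by
    rw [hsqrt, ← h27]
    apply Real.sqrt_le_sqrt
    rw [le_div_iff₀ hP]
    linarith
  refine ⟨hge, ?_, ?_⟩
  · intro h
    have hdiv : (r + s + 1)^3 / ((-r + s + 1) * (r - s + 1) * (r + s - 1)) = 27 := by
      have := h.symm
      rw [hsqrt, ← h27] at h
      have h2 := (Real.sqrt_inj (by positivity) (by norm_num)).mp h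
      linarith [h2]
    have heq : (r + s + 1)^3 = 27 * ((-r + s + 1) * (r - s + 1) * (r + s - 1)) := by
      field_simp at hdiv
      linarith
    have ht2 : (2 - r - s)^2 ≤ 0 := by
      nlinarith [mul_nonneg (sq_nonneg (r - s)) hC.le, sq_nonneg (2 - r - s)]
    have ht : 2 - r - s = 0 := by
      have := sq_nonneg (2 - r - s)
      have : (2 - r - s)^2 = 0 := le_antisymm ht2 this
      exact pow_eq_zero_iff (by norm_num) |>.mp this
    constructor <;> linarith
  · rintro ⟨rfl, rfl⟩
    exact hPi11
end
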